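/- Let B be the open unit ball of ℂ² for the Hermitian (Euclidean) norm and let V = B ∩ {(x, y) ∈ ℂ² : y = x²}. Then V is not a holomorphic retract of B: there is no holomorphic map ρ : B → B with ρ ∘ ρ = ρ on B and ρ(B) = V. -/

import Mathlib

open Metric Set

set_option maxHeartbeats 1000000 in
/-- Let `B` be the open unit ball of `ℂ²` for the Hermitian norm and
`V = B ∩ {(x, y) : y = x²}`. Then `V` is not a holomorphic retract of `B`. -/
theorem stmt3
    (B V : Set (EuclideanSpace ℂ (Fin 2)))
    (hB : B = Metric.ball 0 1)
    (hV : V = B ∩ {p : EuclideanSpace ℂ (Fin 2) | p 1 = (p 0) ^ 2}) :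
    ¬ ∃ ρ : EuclideanSpace ℂ (Fin 2) → EuclideanSpace ℂ (Fin 2),
        AnalyticOnNhd ℂ ρ B ∧ Set.MapsTo ρ B B ∧
        (∀ z ∈ B, ρ (ρ z) = ρ z) ∧ ρ '' B = V := by
  rintro ⟨ρ, han, hmaps, hfix, himg⟩
  subst hB
  -- basic points
  set e₀ : EuclideanSpace ℂ (Fin 2) := EuclideanSpace.single 0 1 with he0
  set e₁ : EuclideanSpace ℂ (Fin 2) := EuclideanSpace.single 1 1 with he1
  set c : ℂ → EuclideanSpace ℂ (Fin 2) := fun t => t • e₀ + t ^ 2 • e₁ with hc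
  have hc0 : ∀ t, c t 0 = t := by
    intro t; simp [hc, he0, he1, EuclideanSpace.single_apply]
  have hc1 : ∀ t, c t 1 = t ^ 2 := by
    intro t; simp [hc, he0, he1, EuclideanSpace.single_apply]
  have hnorm : ∀ z : EuclideanSpace ℂ (Fin 2), ‖z‖ ^ 2 = ‖z 0‖ ^ 2 + ‖z 1‖ ^ 2 := by
    intro z
    rw [EuclideanSpace.norm_eq, Real.sq_sqrt (by positivity)]
    simp [Fin.sum_univ_two]
  -- c t ∈ ball for |t| < 1/2
  have hcball : ∀ t : ℂ, ‖t‖ < 1/2 → c t ∈ Metric.ball (0 : EuclideanSpace ℂ (Fin 2)) 1 := by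
    intro t ht
    rw [mem_ball_zero_iff]
    have h2 : ‖c t‖ ^ 2 < 1 := by
      rw [hnorm, hc0, hc1]
      have : ‖t ^ 2‖ = ‖t‖ ^ 2 := by simp [norm_pow]
      rw [this]
      have hx : (0:ℝ) ≤ ‖t‖ := norm_nonneg t
      have hx2 : ‖t‖ ^ 2 < 1/4 := by nlinarith
      nlinarith
    nlinarith [norm_nonneg (c t)]
  -- ρ fixes V
  have hVfix : ∀ v ∈ V, ρ v = v := by
    intro v hv
    rw [← himg] at hv
    obtain ⟨w, hw, rfl⟩ := hv
    exact hfix w hw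
  have hcV : ∀ t : ℂ, ‖t‖ < 1/2 → c t ∈ V := by
    intro t ht
    rw [hV]
    exact ⟨hcball t ht, by simp [hc0, hc1]⟩
  have hρ0 : ρ 0 = 0 := by
    have := hcV 0 (by norm_num)
    have h0 : c 0 = 0 := by simp [hc]
    rw [h0] at this
    exact hVfix 0 this
  -- f
  set f : EuclideanSpace ℂ (Fin 2) → ℂ := fun z => ρ z 0 with hf
  have hρV : ∀ z ∈ Metric.ball (0 : EuclideanSpace ℂ (Fin 2)) 1, ρ z ∈ V := by
    intro z hz; rw [← himg]; exact ⟨z, hz, rfl⟩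
  -- bound |f z| < (4/5 : ℝ)
  have hfb : ∀ z ∈ Metric.ball (0 : EuclideanSpace ℂ (Fin 2)) 1, ‖f z‖ < (4/5 : ℝ) := by
    intro z hz
    have h1 : ρ z ∈ Metric.ball (0 : EuclideanSpace ℂ (Fin 2)) 1 := hmaps hz
    have h2 : ρ z 1 = (ρ z 0) ^ 2 := by
      have := hρV z hz; rw [hV] at this; exact this.2
    rw [mem_ball_zero_iff] at h1
    have h3 : ‖ρ z‖ ^ 2 < 1 := by nlinarith [norm_nonneg (ρ z)]
    rw [hnorm, h2] at h3
    have h4 : ‖(ρ z 0) ^ 2‖ = ‖ρ z 0‖ ^ 2 := by simp [norm_pow]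
    rw [h4] at h3
    have h5 : ‖f z‖ = ‖ρ z 0‖ := rfl
    rw [h5]
    have hx : (0:ℝ) ≤ ‖ρ z 0‖ := norm_nonneg _
    generalize hgen : ‖ρ z 0‖ = x at h3 hx ⊢
    by_contra h
    push_neg at h
    have h6 : (16/25:ℝ) ≤ x ^ 2 := by nlinarith
    have h7 : ((16/25:ℝ)) ^ 2 ≤ (x ^ 2) ^ 2 := by nlinarith [sq_nonneg (x ^ 2 - 16/25)]
    norm_num at h7
    linarith
  -- f is differentiable at points of ball
  have hfd : ∀ z ∈ Metric.ball (0 : EuclideanSpace ℂ (Fin 2)) 1, DifferentiableAt ℂ f z := by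
    intro z hz
    exact (EuclideanSpace.proj (0 : Fin 2)).differentiableAt.comp z ((han z hz).differentiableAt)
  -- derivative of f at 0 along e₀ is 1
  set L := fderiv ℂ f 0 with hL
  have hfdiff0 : DifferentiableAt ℂ f 0 := hfd 0 (by simp)
  have hcd : HasDerivAt c e₀ 0 := by
    have h1 : HasDerivAt (fun t : ℂ => t • e₀) ((1:ℂ) • e₀) 0 :=
      (hasDerivAt_id (0:ℂ)).smul_const e₀
    have h2 : HasDerivAt (fun t : ℂ => t ^ 2 • e₁) ((2 * (0:ℂ) ^ 1) • e₁) 0 :=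
      (hasDerivAt_pow 2 0).smul_const e₁
    have := h1.add h2
    have h3 : HasDerivAt c ((1:ℂ) • e₀ + (2 * (0:ℂ) ^ 1) • e₁) 0 := this
    simpa using h3
  have hc00 : c 0 = 0 := by simp [hc]
  have hkey : L e₀ = 1 := by
    have hcomp : HasDerivAt (fun t => f (c t)) (L (e₀)) 0 := by
      have hF : HasFDerivAt f L (c 0) := by rw [hc00]; exact hfdiff0.hasFDerivAt
      exact hF.comp_hasDerivAt 0 hcd
    have heq : (fun t => f (c t)) =ᶠ[nhds (0:ℂ)] id := by
      filter_upwards [Metric.ball_mem_nhds (0:ℂ) (by norm_num : (0:ℝ) < 1/2)] with t ht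
      have := hVfix (c t) (hcV t (by simpa using ht))
      show ρ (c t) 0 = id t
      rw [this, hc0]; rfl
    have hid : HasDerivAt (fun t => f (c t)) 1 0 := by
      have hid' : HasDerivAt (id : ℂ → ℂ) 1 0 := hasDerivAt_id 0
      exact hid'.congr_of_eventuallyEq heq
    exact hcomp.unique hid
  -- Schwarz setup
  set g : ℂ → ℂ := fun w => f (w • e₀) with hg
  have he0norm : ‖e₀‖ = 1 := by simp [he0]
  have hmem : ∀ w : ℂ, w ∈ Metric.ball (0:ℂ) 1 → (w • e₀) ∈ Metric.ball (0 : EuclideanSpace ℂ (Fin 2)) 1 := by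
    intro w hw
    rw [mem_ball_zero_iff] at *
    rw [norm_smul, he0norm, mul_one]
    exact hw
  have hg0 : g 0 = 0 := by
    simp [hg, hf, hρ0]
  have hgd : DifferentiableOn ℂ g (Metric.ball 0 1) := by
    intro w hw
    exact ((hfd _ (hmem w hw)).comp w ((differentiable_id.smul_const e₀) w)).differentiableWithinAt
  have hgmaps : MapsTo g (Metric.ball (0:ℂ) 1) (Metric.ball (g 0) (4/5 : ℝ)) := by
    intro w hw
    rw [hg0, mem_ball_zero_iff]
    exact hfb _ (hmem w hw)
  have hschwarz := Complex.norm_deriv_le_div_of_mapsTo_ball hgd (hgmaps.mono_right ball_subset_closedBall) one_pos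
  -- deriv g 0 = L e₀ = 1
  have hgderiv : HasDerivAt g (L e₀) 0 := by
    have hsm : HasDerivAt (fun w : ℂ => w • e₀) e₀ 0 := by
      simpa using (hasDerivAt_id (0:ℂ)).smul_const e₀
    have hF : HasFDerivAt f L ((0:ℂ) • e₀) := by
      rw [zero_smul]; exact hfdiff0.hasFDerivAt
    exact hF.comp_hasDerivAt 0 hsm
  rw [hgderiv.deriv, hkey] at hschwarz
  norm_num at hschwarz
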